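/- For a real symmetric matrix A of nullity k, the conormal space at A to the submanifold of symmetric matrices of nullity k (inside Sym(n,ℝ), dual identified via the trace pairing) consists exactly of the symmetric matrices B with A B = 0, equivalently with column space of B contained in ker A; this space is spanned by the rank-one matrices −v vᵀ with v ∈ ker A, v ≠ 0. -/

import Mathlib

open Module Matrix

lemma outer_symm {n : ℕ} (v : Fin n → ℝ) :
    (Matrix.of fun i j => -(v i * v j) : Matrix (Fin n) (Fin n) ℝ).IsSymm := by
  ext i j; simp [Matrix.IsSymm, Matrix.transpose_apply, mul_comm]

lemma mul_outer_eq_zero {n : ℕ} (A : Matrix (Fin n) (Fin n) ℝ) (v : Fin n → ℝ)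
    (hv : A.mulVec v = 0) :
    A * (Matrix.of fun i j => -(v i * v j)) = 0 := by
  ext i j
  have h0 : ∑ m, A i m * v m = 0 := congrFun hv i
  simp only [Matrix.mul_apply, Matrix.of_apply, Matrix.zero_apply]
  calc ∑ m, A i m * -(v m * v j) = (∑ m, A i m * v m) * (-v j) := by
        rw [Finset.sum_mul]; exact Finset.sum_congr rfl fun m _ => by ring
    _ = 0 := by rw [h0, zero_mul]

lemma mem_span_outer {n : ℕ} (A B : Matrix (Fin n) (Fin n) ℝ)
    (hB : B.IsSymm) (hAB : A * B = 0) :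
    B ∈ Submodule.span ℝ
      {C : Matrix (Fin n) (Fin n) ℝ | ∃ v : Fin n → ℝ, v ≠ 0 ∧ A.mulVec v = 0 ∧
        C = Matrix.of fun i j => -(v i * v j)} := by
  have hH : B.IsHermitian := by
    rwa [Matrix.IsHermitian, conjTranspose_eq_transpose_of_trivial]
  set μ := hH.eigenvalues with hμdef
  set u : Fin n → (Fin n → ℝ) := fun i => ⇑(hH.eigenvectorBasis i) with hudef
  have hentry : ∀ l m, B l m = ∑ p, μ p * (u p l * u p m) := by
    intro l m
    conv_lhs => rw [hH.spectral_theorem, Unitary.conjStarAlgAut_apply]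
    rw [Matrix.mul_assoc, Matrix.mul_apply]
    refine Finset.sum_congr rfl fun p _ => ?_
    simp only [Matrix.diagonal_mul, Matrix.star_eq_conjTranspose, Matrix.conjTranspose_apply,
      star_trivial, Function.comp_apply, RCLike.ofReal_real_eq_id, id_eq,
      hH.eigenvectorUnitary_apply]
    show u p l * (μ p * u p m) = μ p * (u p l * u p m)
    ring
  have hdecomp : B = ∑ i, μ i • (Matrix.of fun l m => u i l * u i m) := by
    ext l m
    rw [hentry l m]
    simp [Matrix.sum_apply]
  rw [hdecomp]
  refine Submodule.sum_mem _ fun i _ => ?_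
  by_cases hμi : μ i = 0
  · simp [hμi]
  · have hu0 : u i ≠ 0 := fun h => hH.eigenvectorBasis.orthonormal.ne_zero i
        (by rw [← WithLp.ofLp_eq_zero]; exact h)
    have heig : B *ᵥ u i = μ i • u i := hH.mulVec_eigenvectorBasis i
    have hker : A.mulVec (u i) = 0 := by
      have h1 : A *ᵥ (B *ᵥ u i) = 0 := by
        rw [Matrix.mulVec_mulVec, hAB, Matrix.zero_mulVec]
      rw [heig, Matrix.mulVec_smul] at h1
      have := smul_eq_zero.mp h1
      tauto
    have : μ i • (Matrix.of fun l m => u i l * u i m : Matrix (Fin n) (Fin n) ℝ)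
        = (-(μ i)) • (Matrix.of fun l m => -(u i l * u i m)) := by
      ext l m
      simp [Matrix.smul_apply, mul_comm]
    rw [this]
    exact Submodule.smul_mem _ _ (Submodule.subset_span ⟨u i, hu0, hker, rfl⟩)

theorem conormal_space_nullity_stratum (n k : ℕ)
    (A : Matrix (Fin n) (Fin n) ℝ) (hA : A.IsSymm)
    (hk : Module.finrank ℝ ↥(LinearMap.ker A.mulVecLin) = k) :
    {B : Matrix (Fin n) (Fin n) ℝ | B.IsSymm ∧
        ∀ X : Matrix (Fin n) (Fin n) ℝ, X.IsSymm →
          (∀ v w : Fin n → ℝ, A.mulVec v = 0 → A.mulVec w = 0 →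
            dotProduct v (X.mulVec w) = 0) →
          Matrix.trace (X * B) = 0} =
      {B : Matrix (Fin n) (Fin n) ℝ | B.IsSymm ∧ A * B = 0} ∧
    {B : Matrix (Fin n) (Fin n) ℝ | B.IsSymm ∧ A * B = 0} =
      {B : Matrix (Fin n) (Fin n) ℝ | B.IsSymm ∧ ∀ u : Fin n → ℝ, A.mulVec (B.mulVec u) = 0} ∧
    (↑(Submodule.span ℝ
        {B : Matrix (Fin n) (Fin n) ℝ | ∃ v : Fin n → ℝ, v ≠ 0 ∧ A.mulVec v = 0 ∧
          B = Matrix.of fun i j => -(v i * v j)}) : Set (Matrix (Fin n) (Fin n) ℝ)) =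
      {B : Matrix (Fin n) (Fin n) ℝ | B.IsSymm ∧ A * B = 0} := by
  have hAt : Aᵀ = A := hA
  -- the trace-vanishing argument used for part 1 (⊇ direction)
  have key_trace : ∀ B : Matrix (Fin n) (Fin n) ℝ, B.IsSymm → A * B = 0 →
      ∀ X : Matrix (Fin n) (Fin n) ℝ,
        (∀ v w : Fin n → ℝ, A.mulVec v = 0 → A.mulVec w = 0 →
          dotProduct v (X.mulVec w) = 0) →
        Matrix.trace (X * B) = 0 := by
    intro B hBs hAB X hX
    have hmem := mem_span_outer A B hBs hAB
    set φ : Matrix (Fin n) (Fin n) ℝ →ₗ[ℝ] ℝ :=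
      (Matrix.traceLinearMap (Fin n) ℝ ℝ).comp (LinearMap.mulLeft ℝ X) with hφ
    have hle : Submodule.span ℝ
        {C : Matrix (Fin n) (Fin n) ℝ | ∃ v : Fin n → ℝ, v ≠ 0 ∧ A.mulVec v = 0 ∧
          C = Matrix.of fun i j => -(v i * v j)} ≤ LinearMap.ker φ := by
      rw [Submodule.span_le]
      rintro C ⟨v, hv0, hvker, rfl⟩
      have hdot := hX v v hvker hvker
      simp only [SetLike.mem_coe, LinearMap.mem_ker, hφ, LinearMap.comp_apply,
        LinearMap.mulLeft_apply, Matrix.traceLinearMap_apply]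
      have hdot' : ∑ l, v l * ∑ m, X l m * v m = 0 := by
        simpa [dotProduct, Matrix.mulVec] using hdot
      calc Matrix.trace (X * Matrix.of fun i j => -(v i * v j))
          = ∑ l, ∑ m, X l m * -(v m * v l) := by
            simp [Matrix.trace, Matrix.diag, Matrix.mul_apply]
        _ = -∑ l, v l * ∑ m, X l m * v m := by
            rw [← Finset.sum_neg_distrib]
            refine Finset.sum_congr rfl fun l _ => ?_
            rw [Finset.mul_sum, ← Finset.sum_neg_distrib]
            refine Finset.sum_congr rfl fun m _ => by ring
        _ = 0 := by rw [hdot', neg_zero]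
    exact LinearMap.mem_ker.mp (hle hmem)
  refine ⟨?_, ?_, ?_⟩
  · -- part 1
    ext B
    simp only [Set.mem_setOf_eq]
    refine ⟨fun ⟨hBs, h⟩ => ⟨hBs, ?_⟩, fun ⟨hBs, hAB⟩ => ⟨hBs, fun X _ hX => key_trace B hBs hAB X hX⟩⟩
    set M := A * B with hM
    set X := A * M + (A * M)ᵀ with hXdef
    have hXs : X.IsSymm := by
      simp [Matrix.IsSymm, hXdef, Matrix.transpose_add, Matrix.transpose_transpose, add_comm]
    have hXtan : ∀ v w : Fin n → ℝ, A.mulVec v = 0 → A.mulVec w = 0 →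
        dotProduct v (X.mulVec w) = 0 := by
      intro v w hv hw
      have h1 : (A * M) *ᵥ w = A *ᵥ (M *ᵥ w) := (Matrix.mulVec_mulVec _ _ _).symm
      have h2 : (A * M)ᵀ *ᵥ w = 0 := by
        rw [Matrix.transpose_mul, ← Matrix.mulVec_mulVec, hAt, hw, Matrix.mulVec_zero]
      rw [hXdef, Matrix.add_mulVec, h1, h2, add_zero]
      rw [Matrix.dotProduct_mulVec]
      have : v ᵥ* A = 0 := by
        rw [← hAt, Matrix.vecMul_transpose, hv]
      rw [this, zero_dotProduct]
    have htr := h X hXs hXtan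
    -- trace (X * B) = 2 * trace (Mᵀ * M)
    have hBA : B * A = Mᵀ := by
      rw [hM, Matrix.transpose_mul, hAt, hBs]
    have htr2 : Matrix.trace (Mᵀ * M) = 0 := by
      have e1 : Matrix.trace (A * M * B) = Matrix.trace (Mᵀ * M) := by
        calc Matrix.trace (A * M * B) = Matrix.trace ((M * B) * A) := by
              rw [Matrix.mul_assoc]; exact Matrix.trace_mul_comm A (M * B)
          _ = Matrix.trace (M * (B * A)) := by rw [Matrix.mul_assoc]
          _ = Matrix.trace (M * Mᵀ) := by rw [hBA]
          _ = Matrix.trace (Mᵀ * M) := Matrix.trace_mul_comm M Mᵀ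
      have e2 : Matrix.trace ((A * M)ᵀ * B) = Matrix.trace (Mᵀ * M) := by
        rw [Matrix.transpose_mul, hAt, Matrix.mul_assoc]
      rw [hXdef, Matrix.add_mul, Matrix.trace_add, e1, e2] at htr
      linarith
    have hM0 : M = 0 := by
      have hsum : ∑ j, ∑ i, M i j * M i j = 0 := by
        simpa [Matrix.trace, Matrix.diag, Matrix.mul_apply, Matrix.transpose_apply] using htr2
      ext i j
      have h1 : ∀ j' ∈ (Finset.univ : Finset (Fin n)), (0:ℝ) ≤ ∑ i', M i' j' * M i' j' :=
        fun j' _ => Finset.sum_nonneg fun i' _ => mul_self_nonneg _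
      have h2 := (Finset.sum_eq_zero_iff_of_nonneg h1).mp hsum j (Finset.mem_univ j)
      have h3 := (Finset.sum_eq_zero_iff_of_nonneg
        (fun i' _ => mul_self_nonneg (M i' j))).mp h2 i (Finset.mem_univ i)
      simpa [mul_self_eq_zero] using h3
    exact hM0
  · -- part 2
    ext B
    simp only [Set.mem_setOf_eq]
    constructor
    · rintro ⟨hBs, hAB⟩
      exact ⟨hBs, fun u => by rw [Matrix.mulVec_mulVec, hAB, Matrix.zero_mulVec]⟩
    · rintro ⟨hBs, h⟩
      refine ⟨hBs, ?_⟩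
      ext i j
      have := congrFun (h (Pi.single j 1)) i
      rw [Matrix.mulVec_mulVec] at this
      simpa using this
  · -- part 3
    ext B
    simp only [SetLike.mem_coe, Set.mem_setOf_eq]
    constructor
    · intro hB
      refine Submodule.span_induction ?_ ?_ ?_ ?_ hB
      · rintro C ⟨v, hv0, hvker, rfl⟩
        exact ⟨outer_symm v, mul_outer_eq_zero A v hvker⟩
      · exact ⟨by simp [Matrix.IsSymm], by simp⟩
      · rintro C D - - ⟨hCs, hC0⟩ ⟨hDs, hD0⟩
        exact ⟨by simp [Matrix.IsSymm, Matrix.transpose_add, hCs.eq, hDs.eq],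
          by rw [Matrix.mul_add, hC0, hD0, add_zero]⟩
      · rintro c C - ⟨hCs, hC0⟩
        exact ⟨by simp [Matrix.IsSymm, Matrix.transpose_smul, hCs.eq],
          by rw [Matrix.mul_smul, hC0, smul_zero]⟩
    · rintro ⟨hBs, hAB⟩
      exact mem_span_outer A B hBs hAB
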